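/- Let Ω be a finite set with |Ω| = 7 or |Ω| = 8, and let G be a solvable subgroup of the symmetric group on Ω acting primitively on Ω. Then for every 3-element subset Δ of Ω, no nonidentity element of G fixes Δ pointwise; that is, the pointwise stabilizer of Δ in G is trivial. -/

import Mathlib

open Pointwise

/-- A permutation group `(G, Ω)` is primitive if it is transitive and every block is trivial. -/
def IsPrimitivePermGroup (Ω : Type*) [Fintype Ω] (G : Subgroup (Equiv.Perm Ω)) : Prop :=
  MulAction.IsPretransitive G Ω ∧
    ∀ B : Set Ω, MulAction.IsBlock G B → MulAction.IsTrivialBlock B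

open scoped commutatorElement in
lemma exists_min_normal {K : Type*} [Group K] [Finite K] [Group.IsSolvable K]
    (hK : ∃ k : K, k ≠ 1) :
    ∃ M : Subgroup K, M.Normal ∧ M ≠ ⊥ ∧
      (∀ m ∈ M, ∀ n ∈ M, m * n = n * m) ∧
      (∃ p : ℕ, p.Prime ∧ ∀ m ∈ M, m ^ p = 1) ∧
      (∀ W : Subgroup K, W ≤ M → W.Normal → W = ⊥ ∨ W = M) := by
  obtain ⟨k₀, hk₀⟩ := hK
  have htop : (⊤ : Subgroup K) ≠ ⊥ := by
    intro h
    exact hk₀ ((Subgroup.mem_bot).mp (h ▸ Subgroup.mem_top k₀))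
  set T : Set ℕ := {n | ∃ N : Subgroup K, N.Normal ∧ N ≠ ⊥ ∧ Nat.card N = n} with hT
  have hTne : (sInf T) ∈ T := Nat.sInf_mem ⟨Nat.card (⊤ : Subgroup K), ⊤, inferInstance, htop, rfl⟩
  obtain ⟨M, hMnorm, hMbot, hMcard⟩ := hTne
  have hmin : ∀ W : Subgroup K, W ≤ M → W.Normal → W = ⊥ ∨ W = M := by
    intro W hle hWn
    by_cases hW : W = ⊥
    · exact Or.inl hW
    · right
      have h1 : sInf T ≤ Nat.card W := Nat.sInf_le ⟨W, hWn, hW, rfl⟩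
      have h2 : Nat.card W ≤ Nat.card M := Subgroup.card_le_of_le hle
      exact Subgroup.eq_of_le_of_card_ge hle (by omega)
  haveI := hMnorm
  -- abelian
  have hDle : ⁅M, M⁆ ≤ M := by
    rw [Subgroup.commutator_le]
    intro g1 h1 g2 h2
    rw [commutatorElement_def]
    exact M.mul_mem (M.mul_mem (M.mul_mem h1 h2) (M.inv_mem h1)) (M.inv_mem h2)
  have hDne : ⁅M, M⁆ ≠ M := by
    intro h
    have hle' : ∀ n, M ≤ derivedSeries K n := by
      intro n
      induction n with
      | zero => exact le_top
      | succ n ih =>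
        rw [derivedSeries_succ]
        calc M = ⁅M, M⁆ := h.symm
        _ ≤ _ := Subgroup.commutator_mono ih ih
    obtain ⟨n, hn⟩ := isSolvable_def K |>.mp inferInstance
    exact hMbot (le_bot_iff.mp (hn ▸ hle' n))
  have hDbot : ⁅M, M⁆ = ⊥ := (hmin _ hDle inferInstance).resolve_right hDne
  have hab : ∀ m ∈ M, ∀ n ∈ M, m * n = n * m := by
    intro m hm n hn
    have : ⁅m, n⁆ ∈ (⊥ : Subgroup K) := hDbot ▸ Subgroup.commutator_mem_commutator hm hn
    exact commutatorElement_eq_one_iff_mul_comm.mp (Subgroup.mem_bot.mp this)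
  -- elementary abelian
  obtain ⟨m, hmM, hm1⟩ := M.bot_or_exists_ne_one.resolve_left hMbot
  have hopos : 0 < orderOf m := orderOf_pos m
  have hone : orderOf m ≠ 1 := fun h => hm1 (orderOf_eq_one_iff.mp h)
  set p := (orderOf m).minFac with hp
  have hpprime : p.Prime := Nat.minFac_prime hone
  have hpdvd : p ∣ orderOf m := Nat.minFac_dvd _
  set Mp : Subgroup K :=
    { carrier := {a : K | a ∈ M ∧ a ^ p = 1}
      one_mem' := ⟨M.one_mem, one_pow p⟩
      mul_mem' := by
        rintro a b ⟨haM, hap⟩ ⟨hbM, hbp⟩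
        refine ⟨M.mul_mem haM hbM, ?_⟩
        have hc : Commute a b := hab a haM b hbM
        rw [hc.mul_pow, hap, hbp, one_mul]
      inv_mem' := by
        rintro a ⟨haM, hap⟩
        exact ⟨M.inv_mem haM, by rw [inv_pow, hap, inv_one]⟩ } with hMpdef
  have hMpnorm : Mp.Normal := by
    constructor
    rintro a ⟨haM, hap⟩ g
    exact ⟨hMnorm.conj_mem a haM g, by rw [conj_pow, hap, mul_one, mul_inv_cancel]⟩
  have hMple : Mp ≤ M := fun a ha => ha.1
  have hMpbot : Mp ≠ ⊥ := by
    intro h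
    have hple : p ≤ orderOf m := hp ▸ Nat.minFac_le hopos
    have h1 : 1 ≤ orderOf m / p := Nat.div_pos hple hpprime.pos
    have hm1' : m ^ (orderOf m / p) ∈ Mp := by
      refine ⟨M.pow_mem hmM _, ?_⟩
      rw [← pow_mul, Nat.div_mul_cancel hpdvd, pow_orderOf_eq_one]
    rw [h, Subgroup.mem_bot] at hm1'
    have : orderOf m ∣ orderOf m / p := orderOf_dvd_of_pow_eq_one hm1'
    have hlt : orderOf m / p < orderOf m := Nat.div_lt_self hopos hpprime.one_lt
    have := Nat.le_of_dvd (by omega) this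
    omega
  have hMpM : Mp = M := (hmin Mp hMple hMpnorm).resolve_left hMpbot
  exact ⟨M, hMnorm, hMbot, hab, ⟨p, hpprime, fun a ha => ((hMpM ▸ ha : a ∈ Mp)).2⟩, hmin⟩


theorem stmt_15 {Ω : Type*} [Fintype Ω] (G : Subgroup (Equiv.Perm Ω))
    (hsolv : IsSolvable G) (hprim : IsPrimitivePermGroup Ω G)
    (hcard : Fintype.card Ω = 7 ∨ Fintype.card Ω = 8) :
    ∀ Δ : Set Ω, Δ.ncard = 3 →
      ∀ g : G, (∀ x ∈ Δ, (g : Equiv.Perm Ω) x = x) → g = 1 := by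
  classical
  haveI : Group.IsSolvable G := hsolv
  obtain ⟨htrans, hblocks⟩ := hprim
  intro Δ hΔ g hgfixΔ
  by_contra hg1
  obtain ⟨x, y, z, hxy, hxz, hyz, rfl⟩ := Set.ncard_eq_three.mp hΔ
  have hact : ∀ (k : ↥G) (u : Ω), k • u = (k : Equiv.Perm Ω) u := fun k u => rfl
  have hgx : g • x = x := hgfixΔ x (by simp)
  have hgy : g • y = y := hgfixΔ y (by simp)
  have hgz : g • z = z := hgfixΔ z (by simp)
  have perm_eq_one : ∀ k : ↥G, (∀ u : Ω, k • u = u) → k = 1 := by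
    intro k hk
    exact Subtype.ext (Equiv.ext fun u => hk u)
  -- minimal normal subgroup
  obtain ⟨M, hMnorm, hMbot, hMab, ⟨p, hpprime, hMexp⟩, hMmin⟩ :=
    exists_min_normal (K := ↥G) ⟨g, hg1⟩
  haveI := hMnorm
  -- M is transitive
  have hMtrans : ∀ u v : Ω, ∃ m ∈ M, m • u = v := by
    have horb : ∀ u : Ω, (MulAction.orbit M u = Set.univ) ∨ ∀ m ∈ M, m • u = u := by
      intro u
      rcases hblocks _ (MulAction.IsBlock.orbit_of_normal (N := M) u) with hsub | huniv
      · right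
        intro m hm
        exact hsub (MulAction.mem_orbit u (⟨m, hm⟩ : ↥M)) (MulAction.mem_orbit_self u)
      · exact Or.inl huniv
    by_cases hex : ∃ u : Ω, MulAction.orbit M u = Set.univ
    · obtain ⟨u, hu⟩ := hex
      intro v w
      obtain ⟨m1, hm1⟩ : v ∈ MulAction.orbit M u := hu ▸ Set.mem_univ v
      obtain ⟨m2, hm2⟩ : w ∈ MulAction.orbit M u := hu ▸ Set.mem_univ w
      refine ⟨(m2 : ↥G) * (m1 : ↥G)⁻¹, M.mul_mem m2.2 (M.inv_mem m1.2), ?_⟩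
      have hms : ∀ (m : ↥M) (t : Ω), m • t = (m : ↥G) • t := fun _ _ => rfl
      simp only [hms] at hm1 hm2
      rw [mul_smul, ← hm1, ← hm2, inv_smul_smul]
    · exfalso
      push_neg at hex
      apply hMbot
      rw [eq_bot_iff]
      intro m hm
      rw [Subgroup.mem_bot]
      apply perm_eq_one
      intro u
      exact ((horb u).resolve_left (hex u)) m hm
  -- M is regular
  have hMreg : ∀ m ∈ M, ∀ w : Ω, m • w = w → m = 1 := by
    intro m hm w hw
    apply perm_eq_one
    intro u
    obtain ⟨n, hnM, hn⟩ := hMtrans w u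
    calc m • u = (m * n) • w := by rw [mul_smul, hn]
    _ = (n * m) • w := by rw [hMab m hm n hnM]
    _ = u := by rw [mul_smul, hw, hn]
  -- order of M
  have hMcard : Nat.card M = Fintype.card Ω := by
    rw [← Nat.card_eq_fintype_card]
    apply Nat.card_eq_of_bijective (fun m : ↥M => (m : ↥G) • x)
    constructor
    · intro m m' hmm
      simp only at hmm
      have : ((m' : ↥G)⁻¹ * m) • x = x := by rw [mul_smul, hmm, inv_smul_smul]
      have := hMreg _ (M.mul_mem (M.inv_mem m'.2) m.2) x this
      have : (m' : ↥G)⁻¹ * m = 1 := this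
      rw [inv_mul_eq_one] at this
      exact Subtype.ext this.symm
    · intro u
      obtain ⟨m, hmM, hm⟩ := hMtrans x u
      exact ⟨⟨m, hmM⟩, hm⟩
  have hgx' : g⁻¹ • x = x := by rw [inv_smul_eq_iff, hgx]
  rcases hcard with h7 | h8
  · -- degree 7
    have hM7 : Nat.card M = 7 := by rw [hMcard, h7]
    obtain ⟨m₀, hm₀M, hm₀⟩ := hMtrans x y
    have hm₀1 : m₀ ≠ 1 := by rintro rfl; rw [one_smul] at hm₀; exact hxy hm₀
    have hord : orderOf m₀ = 7 := by
      have hdvd : orderOf m₀ ∣ 7 := by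
        have h := orderOf_dvd_natCard (⟨m₀, hm₀M⟩ : ↥M)
        rw [hM7, Subgroup.orderOf_mk] at h
        exact h
      rcases (Nat.Prime.eq_one_or_self_of_dvd (by norm_num) _ hdvd) with h | h
      · exact absurd (orderOf_eq_one_iff.mp h) hm₀1
      · exact h
    have hzp : Subgroup.zpowers m₀ = M := by
      apply Subgroup.eq_of_le_of_card_ge (Subgroup.zpowers_le.mpr hm₀M)
      rw [Nat.card_zpowers, hord, hM7]
    obtain ⟨k, hk⟩ := Subgroup.mem_zpowers_iff.mp (hzp ▸ hMnorm.conj_mem m₀ hm₀M g)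
    have hkey : g * m₀ * g⁻¹ = m₀ := by
      have h1 : (m₀ ^ k) • x = m₀ • x := by
        rw [hk]
        calc (g * m₀ * g⁻¹) • x = g • m₀ • g⁻¹ • x := by rw [mul_smul, mul_smul]
        _ = g • y := by rw [hgx', hm₀]
        _ = m₀ • x := by rw [hgy, hm₀]
      have h2 : (m₀⁻¹ * m₀ ^ k) • x = x := by rw [mul_smul, h1, inv_smul_smul]
      have h3 := hMreg _ (M.mul_mem (M.inv_mem hm₀M) (M.zpow_mem hm₀M k)) x h2
      rw [inv_mul_eq_one] at h3
      rw [← hk, ← h3]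
    apply hg1
    apply perm_eq_one
    intro u
    obtain ⟨m, hmM, hmu⟩ := hMtrans x u
    obtain ⟨s, hs⟩ := Subgroup.mem_zpowers_iff.mp (hzp ▸ hmM : m ∈ Subgroup.zpowers m₀)
    have hcon : g * m₀ ^ s * g⁻¹ = m₀ ^ s := by rw [← conj_zpow, hkey]
    have hcomm : g * m₀ ^ s = m₀ ^ s * g := by
      have h := congrArg (fun t => t * g) hcon
      simpa [mul_assoc] using h
    calc g • u = g • m₀ ^ s • x := by rw [← hmu, hs]
    _ = (g * m₀ ^ s) • x := by rw [mul_smul]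
    _ = (m₀ ^ s * g) • x := by rw [hcomm]
    _ = m₀ ^ s • x := by rw [mul_smul, hgx]
    _ = u := by rw [hs, hmu]
  · -- degree 8
    set H : Subgroup ↥G := MulAction.stabilizer (↥G) x with hHdef
    have hgH : g ∈ H := hgx
    have hg1' : (⟨g, hgH⟩ : ↥H) ≠ 1 := by
      intro h
      exact hg1 (Subtype.ext_iff.mp h)
    obtain ⟨A, hAnorm, hAbot, hAab, ⟨q, hqprime, hAexp⟩, hAmin⟩ :=
      exists_min_normal (K := ↥H) ⟨⟨g, hgH⟩, hg1'⟩
    set A' : Subgroup ↥G := A.map H.subtype with hA'def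
    have hA'le : A' ≤ H := by
      rintro a ⟨a₀, _, rfl⟩
      exact a₀.2
    have hA'bot : A' ≠ ⊥ := by
      intro h
      rw [Subgroup.map_eq_bot_iff, Subgroup.ker_subtype, le_bot_iff] at h
      exact hAbot h
    have hA'exp : ∀ a ∈ A', a ^ q = 1 := by
      rintro a ⟨a₀, ha₀, rfl⟩
      calc (H.subtype a₀) ^ q = H.subtype (a₀ ^ q) := (map_pow _ _ _).symm
      _ = 1 := by rw [hAexp a₀ ha₀, map_one]
    have hA'normH : ∀ h ∈ H, ∀ a ∈ A', h * a * h⁻¹ ∈ A' := by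
      intro h hh a ha
      obtain ⟨a₀, ha₀, rfl⟩ := ha
      exact ⟨_, hAnorm.conj_mem a₀ ha₀ ⟨h, hh⟩, rfl⟩
    -- the centralizer intersection is trivial
    have hdecomp : ∀ γ : ↥G, ∃ m ∈ M, ∃ h ∈ H, γ = m * h := by
      intro γ
      obtain ⟨m, hmM, hm⟩ := hMtrans x (γ • x)
      refine ⟨m, hmM, m⁻¹ * γ, ?_, by group⟩
      show (m⁻¹ * γ) • x = x
      rw [mul_smul, ← hm, inv_smul_smul]
    set Z : Subgroup ↥G := M ⊓ Subgroup.centralizer (A' : Set ↥G) with hZdef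
    have hZnorm : Z.Normal := by
      constructor
      intro w hw γ
      obtain ⟨hwM, hwc⟩ := Subgroup.mem_inf.mp hw
      obtain ⟨m, hmM, h, hh, rfl⟩ := hdecomp γ
      have hinner : h * w * h⁻¹ ∈ Z := by
        rw [hZdef, Subgroup.mem_inf]
        refine ⟨hMnorm.conj_mem w hwM h, ?_⟩
        rw [Subgroup.mem_centralizer_iff]
        intro a ha
        have ha' : h⁻¹ * a * h ∈ A' := by
          have h5 := hA'normH h⁻¹ (H.inv_mem hh) a ha
          rwa [inv_inv] at h5
        have hcomm := Subgroup.mem_centralizer_iff.mp hwc _ ha'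
        calc a * (h * w * h⁻¹) = h * ((h⁻¹ * a * h) * w) * h⁻¹ := by group
        _ = h * (w * (h⁻¹ * a * h)) * h⁻¹ := by rw [hcomm]
        _ = (h * w * h⁻¹) * a := by group
      have heq : (m * h) * w * (m * h)⁻¹ = m * (h * w * h⁻¹) * m⁻¹ := by group
      rw [heq, hMab m hmM _ (Subgroup.mem_inf.mp hinner).1, mul_inv_cancel_right]
      exact hinner
    have hZbot : Z = ⊥ := by
      rcases hMmin Z inf_le_left hZnorm with h | h
      · exact h
      · exfalso
        obtain ⟨a₀, ha₀, ha₀1⟩ := A'.bot_or_exists_ne_one.resolve_left hA'bot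
        apply ha₀1
        apply perm_eq_one
        intro u
        obtain ⟨m, hmM, hmu⟩ := hMtrans x u
        have hmZ : m ∈ Z := h ▸ hmM
        have hcm := Subgroup.mem_centralizer_iff.mp (Subgroup.mem_inf.mp hmZ).2 a₀ ha₀
        have hax : a₀ • x = x := hA'le ha₀
        calc a₀ • u = (a₀ * m) • x := by rw [mul_smul, hmu]
        _ = (m * a₀) • x := by rw [hcm]
        _ = u := by rw [mul_smul, hax, hmu]
    -- the common fixed points of A' are exactly {x}
    have hfixA : ∀ w : Ω, (∀ a ∈ A', a • w = w) → w = x := by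
      intro w hfw
      obtain ⟨m, hmM, rfl⟩ := hMtrans x w
      have hmZ : m ∈ Z := by
        rw [hZdef, Subgroup.mem_inf]
        refine ⟨hmM, Subgroup.mem_centralizer_iff.mpr ?_⟩
        intro a ha
        have haxi : a⁻¹ • x = x := by
          rw [inv_smul_eq_iff]
          exact (hA'le ha : a • x = x).symm
        have he : (a * m * a⁻¹) • x = m • x := by
          rw [mul_smul, mul_smul, haxi, hfw a ha]
        have h2 : (m⁻¹ * (a * m * a⁻¹)) • x = x := by
          rw [mul_smul, he, inv_smul_smul]
        have h3 := hMreg _ (M.mul_mem (M.inv_mem hmM) (hMnorm.conj_mem m hmM a)) x h2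
        rw [inv_mul_eq_one] at h3
        have : a * m * a⁻¹ = m := h3.symm
        calc a * m = (a * m * a⁻¹) * a := by group
        _ = m * a := by rw [this]
      rw [hZbot, Subgroup.mem_bot] at hmZ
      rw [hmZ, one_smul]
    -- A' is a q-group
    have hPG : IsPGroup q ↥A' := by
      intro a
      refine ⟨1, ?_⟩
      rw [pow_one]
      have h := hA'exp a a.2
      exact Subtype.ext (by simpa using h)
    -- q = 7
    haveI : Fact (Nat.Prime q) := ⟨hqprime⟩
    have hq7 : q = 7 := by
      have hmod := hPG.card_modEq_card_fixedPoints Ω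
      have hfp : MulAction.fixedPoints ↥A' Ω = {x} := by
        ext w
        simp only [MulAction.mem_fixedPoints, Set.mem_singleton_iff]
        constructor
        · intro hfw
          exact hfixA w (fun a ha => hfw ⟨a, ha⟩)
        · intro hwx a
          rw [hwx]
          exact MulAction.mem_stabilizer_iff.mp (hA'le a.2)
      rw [hfp] at hmod
      have h1 : Nat.card ({x} : Set Ω) = 1 := by simp
      rw [h1, Nat.card_eq_fintype_card, h8] at hmod
      have hdvd : (q : ℤ) ∣ 1 - 8 := (Nat.modEq_iff_dvd).mp hmod
      have hdvd7 : q ∣ 7 := by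
        have h3 : ((1:ℤ) - 8) = -7 := by norm_num
        rw [h3, dvd_neg] at hdvd
        exact_mod_cast hdvd
      rcases (Nat.Prime.eq_one_or_self_of_dvd (by norm_num) _ hdvd7) with h | h
      · exact absurd h hqprime.ne_one
      · exact h
    subst hq7
    haveI : Fact (Nat.Prime 7) := ⟨by norm_num⟩
    -- card A' = 7
    obtain ⟨n, hn⟩ := (IsPGroup.iff_card).mp hPG
    have hdvd40320 : Nat.card ↥A' ∣ 40320 := by
      have h1 : Nat.card ↥A' ∣ Nat.card ↥G := Subgroup.card_subgroup_dvd_card A'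
      have h2 : Nat.card ↥G ∣ Nat.card (Equiv.Perm Ω) := Subgroup.card_subgroup_dvd_card G
      have h3 : Nat.card (Equiv.Perm Ω) = 40320 := by
        rw [Nat.card_eq_fintype_card, Fintype.card_perm, h8]
        norm_num [Nat.factorial]
      exact h3 ▸ h1.trans h2
    have hcardA' : Nat.card ↥A' = 7 := by
      have hn2 : n < 2 := by
        by_contra hcon
        push_neg at hcon
        have h49 : (7:ℕ)^2 ∣ 7^n := pow_dvd_pow 7 hcon
        have : (7:ℕ)^2 ∣ 40320 := h49.trans (hn ▸ hdvd40320)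
        norm_num at this
      have hn0 : n ≠ 0 := by
        intro h
        apply hA'bot
        apply Subgroup.card_eq_one.mp
        rw [hn, h, pow_zero]
      have hn1 : n = 1 := by omega
      rw [hn, hn1, pow_one]
    -- every nontrivial element of A' generates A'
    have hzgen : ∀ b ∈ A', b ≠ 1 → orderOf b = 7 ∧ Subgroup.zpowers b = A' := by
      intro b hb hb1
      have hord : orderOf b = 7 := by
        have hdvd : orderOf b ∣ 7 := by
          have h := orderOf_dvd_natCard (⟨b, hb⟩ : ↥A')
          rw [hcardA', Subgroup.orderOf_mk] at h
          exact h
        rcases (Nat.Prime.eq_one_or_self_of_dvd (by norm_num) _ hdvd) with h | h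
        · exact absurd (orderOf_eq_one_iff.mp h) hb1
        · exact h
      refine ⟨hord, ?_⟩
      apply Subgroup.eq_of_le_of_card_ge (Subgroup.zpowers_le.mpr hb)
      rw [Nat.card_zpowers, hord, hcardA']
    -- a nontrivial element of A' fixing some w forces w = x
    have hfixb : ∀ b ∈ A', b ≠ 1 → ∀ w : Ω, b • w = w → w = x := by
      intro b hb hb1 w hbw
      obtain ⟨-, hzb⟩ := hzgen b hb hb1
      apply hfixA
      intro a' ha'
      rw [← hzb] at ha'
      have hle : Subgroup.zpowers b ≤ MulAction.stabilizer ↥G w :=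
        Subgroup.zpowers_le.mpr (MulAction.mem_stabilizer_iff.mpr hbw)
      exact hle ha'
    -- fix a generator a
    obtain ⟨a, haA, ha1⟩ := A'.bot_or_exists_ne_one.resolve_left hA'bot
    obtain ⟨horda, hza⟩ := hzgen a haA ha1
    have haxs : ∀ s : ℕ, a ^ s • x = x := fun s =>
      MulAction.mem_stabilizer_iff.mp ((MulAction.stabilizer ↥G x).pow_mem (hA'le haA) s)
    have hy_ne : ∀ s : ℕ, a ^ s • y ≠ x := by
      intro s h
      have h2 : a ^ s • y = a ^ s • x := by rw [h, haxs s]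
      exact hxy (MulAction.injective (a ^ s) h2).symm
    -- covering Ω \ {x} by the a-orbit of y
    have hfixz : ∀ i : ℤ, a ^ i • y = y → (7:ℤ) ∣ i := by
      intro i hi
      by_cases hb1 : a ^ i = 1
      · have h6 := (orderOf_dvd_iff_zpow_eq_one).mpr hb1
        rw [horda] at h6
        exact_mod_cast h6
      · exact absurd (hfixb _ (A'.zpow_mem haA i) hb1 y hi) (Ne.symm hxy)
    have hinj : ∀ i j : ℕ, i < 7 → j < 7 → a ^ i • y = a ^ j • y → i = j := by
      intro i j hi hj hij
      have hij' : a ^ ((i:ℤ)) • y = a ^ ((j:ℤ)) • y := by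
        rw [zpow_natCast, zpow_natCast, hij]
      have hb : a ^ ((i:ℤ) - j) • y = y := by
        have hrw : ((i:ℤ) - j) = -(j:ℤ) + i := by ring
        rw [hrw, zpow_add, mul_smul, hij', zpow_neg, inv_smul_smul]
      have := hfixz _ hb
      omega
    have hcover : ∀ w : Ω, w ≠ x → ∃ s : ℕ, s < 7 ∧ a ^ s • y = w := by
      intro w hw
      have hcard7 : Fintype.card {v : Ω // v ≠ x} = 7 := by
        have h1 : Fintype.card {v : Ω // v = x} = 1 := Fintype.card_subtype_eq x
        have h2 := Fintype.card_subtype_compl (fun v : Ω => v = x)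
        rw [h1, h8] at h2
        exact h2
      let f : Fin 7 → {v : Ω // v ≠ x} := fun j => ⟨a ^ (j : ℕ) • y, hy_ne j⟩
      have hfinj : Function.Injective f := by
        intro i j hijf
        exact Fin.ext (hinj i j i.2 j.2 (congrArg Subtype.val hijf))
      have hfbij : Function.Bijective f :=
        (Fintype.bijective_iff_injective_and_card f).mpr
          ⟨hfinj, by rw [hcard7, Fintype.card_fin]⟩
      obtain ⟨j, hj⟩ := hfbij.2 ⟨w, hw⟩
      exact ⟨j, j.2, congrArg Subtype.val hj⟩
    -- z is in the a-orbit of y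
    obtain ⟨m, hm7, hmz⟩ := hcover z (Ne.symm hxz)
    have hm0 : m ≠ 0 := by
      intro h
      rw [h, pow_zero, one_smul] at hmz
      exact hyz hmz
    -- conjugation of a by g
    obtain ⟨k, hk⟩ := Subgroup.mem_zpowers_iff.mp (hza ▸ hA'normH g hgH a haA)
    have hgyinv : g⁻¹ • y = y := by rw [inv_smul_eq_iff, hgy]
    have hconjm : g * a ^ m * g⁻¹ = (a ^ k) ^ m := by rw [← conj_pow, ← hk]
    have h1 : (a ^ k) ^ m • y = z := by
      rw [← hconjm]
      calc (g * a ^ m * g⁻¹) • y = g • a ^ m • g⁻¹ • y := by rw [mul_smul, mul_smul]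
      _ = g • z := by rw [hgyinv, hmz]
      _ = z := hgz
    have h2 : a ^ (k * (m:ℤ)) • y = z := by
      rw [zpow_mul, zpow_natCast]
      exact h1
    have hmz' : a ^ ((m:ℤ)) • y = z := by rw [zpow_natCast]; exact hmz
    have hkm : a ^ (k * (m:ℤ) - m) • y = y := by
      have hrw : (k * (m:ℤ) - m) = -(m:ℤ) + k * m := by ring
      rw [hrw, zpow_add, mul_smul, h2, zpow_neg, ← hmz', inv_smul_smul]
    have hdvd7' : (7:ℤ) ∣ (k - 1) * m := by
      have h3 := hfixz _ hkm
      have hrw : k * (m:ℤ) - m = (k - 1) * m := by ring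
      rwa [hrw] at h3
    have hk1 : (7:ℤ) ∣ (k - 1) := by
      have hprime7 : Prime (7:ℤ) := by norm_num
      rcases (hprime7.dvd_mul).mp hdvd7' with h | h
      · exact h
      · exfalso
        have : (7:ℤ) ∣ (m:ℤ) := h
        omega
    have hgag : g * a * g⁻¹ = a := by
      have hka : a ^ (k - 1) = 1 := by
        apply (orderOf_dvd_iff_zpow_eq_one).mp
        rw [horda]
        exact_mod_cast hk1
      have : a ^ k = a := by
        have hrw : a ^ k = a ^ (k - 1) * a := by rw [← zpow_add_one, sub_add_cancel]
        rw [hrw, hka, one_mul]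
      rw [← hk, this]
    -- conclude g = 1
    apply hg1
    apply perm_eq_one
    intro u
    by_cases hu : u = x
    · rw [hu]; exact hgx
    · obtain ⟨s, _, hs⟩ := hcover u hu
      have hconj : g * a ^ s * g⁻¹ = a ^ s := by rw [← conj_pow, hgag]
      have hcm : g * a ^ s = a ^ s * g := by
        have h := congrArg (fun t => t * g) hconj
        simpa [mul_assoc] using h
      calc g • u = g • a ^ s • y := by rw [hs]
      _ = (g * a ^ s) • y := by rw [mul_smul]
      _ = (a ^ s * g) • y := by rw [hcm]
      _ = a ^ s • y := by rw [mul_smul, hgy]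
      _ = u := hs
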